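/- Let Ω ⊂ ℝ^d be a bounded open set, v ∈ V a vertex (a fixed point of ∂Ω), δ > 0, and let (x_i)_{i∈ℕ} be points in Ω with radii R_i = ĉ·dist(x_i, v) for some fixed ĉ ∈ (0,1), such that the balls B(x_i, R_i) have finite overlap N (every point of ℝ^d lies in at most N of the balls) and are contained in Ω. Then the series ∑_i R_i^δ converges, with a bound depending only on d, δ, N, ĉ, and Ω. -/

import Mathlib

open MeasureTheory Metric Set
open scoped ENNReal NNReal

/-- Summability of `∑ Rᵢ^δ` for a family of balls centered at points of a bounded open
set `Ω`, with radii `Rᵢ = chat · dist(xᵢ, v)` proportional to the distance to a boundary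
point `v`, contained in `Ω` and satisfying a finite overlap property. -/
theorem summable_radii_pow {d : ℕ} (Ω : Set (EuclideanSpace ℝ (Fin d)))
    (hΩo : IsOpen Ω) (hΩb : Bornology.IsBounded Ω)
    (v : EuclideanSpace ℝ (Fin d)) (hv : v ∈ frontier Ω)
    (δ : ℝ) (hδ : 0 < δ)
    (chat : ℝ) (hchat : chat ∈ Set.Ioo (0:ℝ) 1)
    (x : ℕ → EuclideanSpace ℝ (Fin d)) (hx : ∀ i, x i ∈ Ω)
    (R : ℕ → ℝ) (hR : ∀ i, R i = chat * dist (x i) v)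
    (hsub : ∀ i, Metric.ball (x i) (R i) ⊆ Ω)
    (N : ℕ)
    (hover : ∀ y : EuclideanSpace ℝ (Fin d),
      {i | y ∈ Metric.ball (x i) (R i)}.encard ≤ (N : ℕ∞)) :
    Summable (fun i => R i ^ δ) := by
  classical
  obtain ⟨hc0, hc1⟩ := hchat
  -- v is not in Ω
  have hvΩ : v ∉ Ω := by
    rw [hΩo.frontier_eq] at hv
    exact hv.2
  rcases eq_or_ne d 0 with rfl | hd
  · haveI : Subsingleton (EuclideanSpace ℝ (Fin 0)) :=
      ⟨fun a b => PiLp.ext fun i => Fin.elim0 i⟩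
    exact absurd (Subsingleton.elim v (x 0) ▸ hx 0) hvΩ
  haveI : Nontrivial (EuclideanSpace ℝ (Fin d)) := by
    rw [← Module.finrank_pos_iff (R := ℝ)]
    simp [Nat.pos_of_ne_zero hd]
  have hfinrank : Module.finrank ℝ (EuclideanSpace ℝ (Fin d)) = d := finrank_euclideanSpace_fin
  obtain ⟨M, hM0, hΩM⟩ : ∃ r : ℝ, 0 < r ∧ Ω ⊆ closedBall v r := hΩb.subset_closedBall_lt 0 v
  have hD0 : ∀ i, 0 < dist (x i) v := fun i =>
    dist_pos.mpr (fun h => hvΩ (h ▸ hx i))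
  have hDM : ∀ i, dist (x i) v ≤ M := fun i => hΩM (hx i)
  have hR0 : ∀ i, 0 < R i := fun i => by rw [hR i]; exact mul_pos hc0 (hD0 i)
  -- dyadic index
  set k : ℕ → ℕ := fun i => ⌊Real.logb 2 (M / dist (x i) v)⌋₊ with hk
  have hdiv1 : ∀ i, 1 ≤ M / dist (x i) v := fun i => (one_le_div (hD0 i)).mpr (hDM i)
  have hkup : ∀ i, dist (x i) v ≤ M / 2 ^ k i := by
    intro i
    have hlog : (0:ℝ) ≤ Real.logb 2 (M / dist (x i) v) :=
      Real.logb_nonneg one_lt_two (hdiv1 i)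
    have h1 : ((k i : ℝ)) ≤ Real.logb 2 (M / dist (x i) v) := Nat.floor_le hlog
    have h2 : (2:ℝ) ^ (k i : ℝ) ≤ (2:ℝ) ^ Real.logb 2 (M / dist (x i) v) :=
      Real.rpow_le_rpow_of_exponent_le one_le_two h1
    rw [Real.rpow_logb (by norm_num) (by norm_num) (lt_of_lt_of_le one_pos (hdiv1 i)),
      Real.rpow_natCast] at h2
    rw [le_div_iff₀ (by positivity)]
    rw [le_div_iff₀ (hD0 i)] at h2
    linarith [h2]
  have hklow : ∀ i, M / 2 ^ (k i + 1) < dist (x i) v := by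
    intro i
    have h1 : Real.logb 2 (M / dist (x i) v) < (k i : ℝ) + 1 := Nat.lt_floor_add_one _
    have h2 : (2:ℝ) ^ Real.logb 2 (M / dist (x i) v) < (2:ℝ) ^ ((k i : ℝ) + 1) :=
      Real.rpow_lt_rpow_of_exponent_lt one_lt_two h1
    rw [Real.rpow_logb (by norm_num) (by norm_num) (lt_of_lt_of_le one_pos (hdiv1 i))] at h2
    have : (2:ℝ) ^ ((k i : ℝ) + 1) = (2:ℝ) ^ (k i + 1) := by
      rw [← Real.rpow_natCast (2:ℝ) (k i + 1)]
      push_cast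
      ring_nf
    rw [this] at h2
    rw [div_lt_iff₀ (by positivity)]
    rw [div_lt_iff₀ (hD0 i)] at h2
    linarith [h2]
  -- counting: each dyadic level contains at most K indices
  set K : ℕ := N * ⌈(4 / chat) ^ d⌉₊ with hK
  have hcard : ∀ (k₀ : ℕ) (u : Finset ℕ), (∀ i ∈ u, k i = k₀) → u.card ≤ K := by
    intro k₀ u hu
    set ι1 : ℝ≥0∞ := volume (ball (0 : EuclideanSpace ℝ (Fin d)) 1) with hι1
    have hι0 : ι1 ≠ 0 := (measure_ball_pos _ _ one_pos).ne'
    have hιtop : ι1 ≠ ⊤ := measure_ball_lt_top.ne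
    set a : ℝ := chat * (M / 2 ^ (k₀ + 1)) with ha
    have ha0 : 0 < a := by positivity
    set S : Set (EuclideanSpace ℝ (Fin d)) := ball v (2 * (M / 2 ^ k₀)) with hS
    -- each ball is large
    have hbig : ∀ i ∈ u, ENNReal.ofReal (a ^ d) * ι1 ≤ volume (ball (x i) (R i)) := by
      intro i hi
      rw [volume.addHaar_ball (x i) (hR0 i).le, hfinrank]
      gcongr
      rw [hR i, ha, ← hu i hi]
      exact mul_le_mul_of_nonneg_left (hklow i).le hc0.le
    -- each ball is inside S
    have hin : ∀ i ∈ u, ball (x i) (R i) ⊆ S := by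
      intro i hi y hy
      rw [mem_ball] at hy ⊢
      have h1 : dist y v ≤ dist y (x i) + dist (x i) v := dist_triangle _ _ _
      have h2 : R i < dist (x i) v := by
        rw [hR i]
        nlinarith [hD0 i]
      have h3 : dist (x i) v ≤ M / 2 ^ k₀ := hu i hi ▸ hkup i
      linarith
    -- overlap bound
    have hover' : ∑ i ∈ u, volume (ball (x i) (R i)) ≤ (N : ℝ≥0∞) * volume S := by
      have h1 : ∀ i ∈ u, volume (ball (x i) (R i)) =
          ∫⁻ y, (ball (x i) (R i)).indicator (1 : EuclideanSpace ℝ (Fin d) → ℝ≥0∞) y := by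
        intro i _
        exact (lintegral_indicator_one measurableSet_ball).symm
      have h2 : (fun y => S.indicator (fun _ => (N:ℝ≥0∞)) y) ≤
          fun _ => (N:ℝ≥0∞) := fun y => Set.indicator_le_self _ _ y
      calc ∑ i ∈ u, volume (ball (x i) (R i))
          = ∑ i ∈ u, ∫⁻ y, (ball (x i) (R i)).indicator (1 : EuclideanSpace ℝ (Fin d) → ℝ≥0∞) y :=
            Finset.sum_congr rfl h1
        _ = ∫⁻ y, ∑ i ∈ u, (ball (x i) (R i)).indicator (1 : EuclideanSpace ℝ (Fin d) → ℝ≥0∞) y :=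
            (lintegral_finset_sum _ (fun i _ => (measurable_const.indicator measurableSet_ball))).symm
        _ ≤ ∫⁻ y, S.indicator (fun _ => (N:ℝ≥0∞)) y := by
            apply lintegral_mono
            intro y
            show ∑ i ∈ u, (ball (x i) (R i)).indicator (1 : EuclideanSpace ℝ (Fin d) → ℝ≥0∞) y ≤
              S.indicator (fun _ => (N:ℝ≥0∞)) y
            by_cases hyS : y ∈ S
            · rw [Set.indicator_of_mem hyS]
              have : ∑ i ∈ u, (ball (x i) (R i)).indicator (1 : EuclideanSpace ℝ (Fin d) → ℝ≥0∞) y =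
                  ((u.filter (fun i => y ∈ ball (x i) (R i))).card : ℝ≥0∞) := by
                simp only [Set.indicator_apply, Pi.one_apply]
                rw [Finset.sum_boole]
              rw [this]
              have hsubset : ((u.filter (fun i => y ∈ ball (x i) (R i)) : Finset ℕ) : Set ℕ) ⊆
                  {i | y ∈ ball (x i) (R i)} := fun i hi => (Finset.mem_filter.mp hi).2
              have := (Set.encard_mono hsubset).trans (hover y)
              rw [Set.encard_coe_eq_coe_finsetCard] at this
              exact_mod_cast Nat.cast_le.mpr (by exact_mod_cast this)
            · have : ∀ i ∈ u, (ball (x i) (R i)).indicator (1 : EuclideanSpace ℝ (Fin d) → ℝ≥0∞) y = 0 := by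
                intro i hi
                exact Set.indicator_of_notMem (fun hy => hyS (hin i hi hy)) _
              rw [Finset.sum_congr rfl this, Finset.sum_const, smul_zero]
              exact zero_le
        _ = (N : ℝ≥0∞) * volume S := by
            rw [lintegral_indicator measurableSet_ball, setLIntegral_const]
    -- volume of S and conclusion
    have hvolS : volume S = ENNReal.ofReal ((2 * (M / 2 ^ k₀)) ^ d) * ι1 :=
      volume.addHaar_ball v (by positivity) |>.trans (by rw [hfinrank])
    have hratio : (2 * (M / 2 ^ k₀)) ^ d = (4 / chat) ^ d * a ^ d := by
      rw [← mul_pow]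
      congr 1
      rw [ha, pow_succ]
      field_simp
      ring
    have hchain : (u.card : ℝ≥0∞) * (ENNReal.ofReal (a ^ d) * ι1) ≤
        (K : ℝ≥0∞) * (ENNReal.ofReal (a ^ d) * ι1) := by
      calc (u.card : ℝ≥0∞) * (ENNReal.ofReal (a ^ d) * ι1)
          = ∑ _i ∈ u, (ENNReal.ofReal (a ^ d) * ι1) := by
            rw [Finset.sum_const, nsmul_eq_mul]
        _ ≤ ∑ i ∈ u, volume (ball (x i) (R i)) := Finset.sum_le_sum hbig
        _ ≤ (N : ℝ≥0∞) * volume S := hover'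
        _ = (N : ℝ≥0∞) * (ENNReal.ofReal ((4 / chat) ^ d * a ^ d) * ι1) := by
            rw [hvolS, hratio]
        _ ≤ (N : ℝ≥0∞) * ((⌈(4 / chat) ^ d⌉₊ : ℝ≥0∞) * ENNReal.ofReal (a ^ d) * ι1) := by
            gcongr
            rw [ENNReal.ofReal_mul (by positivity)]
            gcongr
            rw [← ENNReal.ofReal_natCast]
            exact ENNReal.ofReal_le_ofReal (Nat.le_ceil _)
        _ = (K : ℝ≥0∞) * (ENNReal.ofReal (a ^ d) * ι1) := by
            rw [hK]
            push_cast
            ring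
    have hne0 : ENNReal.ofReal (a ^ d) * ι1 ≠ 0 := by
      apply mul_ne_zero _ hι0
      simp only [ne_eq, ENNReal.ofReal_eq_zero, not_le]
      positivity
    have hnetop : ENNReal.ofReal (a ^ d) * ι1 ≠ ⊤ :=
      ENNReal.mul_ne_top ENNReal.ofReal_ne_top hιtop
    have := (ENNReal.mul_le_mul_iff_left hne0 hnetop).mp hchain
    exact_mod_cast this
  -- geometric comparison
  set g : ℕ → ℝ := fun k₀ => (chat * M) ^ δ * ((2:ℝ) ^ (-δ)) ^ k₀ with hg
  have hg0 : ∀ k₀, 0 ≤ g k₀ := fun k₀ => by positivity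
  have hgsum : Summable g := by
    apply Summable.mul_left
    apply summable_geometric_of_lt_one (by positivity)
    rw [Real.rpow_neg (by norm_num)]
    rw [inv_lt_one_iff₀]
    right
    exact Real.one_lt_rpow_iff_of_pos (by norm_num) |>.mpr (Or.inl ⟨one_lt_two, hδ⟩)
  have hfg : ∀ i, R i ^ δ ≤ g (k i) := by
    intro i
    have h1 : R i ≤ chat * (M / 2 ^ k i) := by
      rw [hR i]
      exact mul_le_mul_of_nonneg_left (hkup i) hc0.le
    have h2 : R i ^ δ ≤ (chat * (M / 2 ^ k i)) ^ δ :=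
      Real.rpow_le_rpow (hR0 i).le h1 hδ.le
    refine h2.trans_eq ?_
    rw [hg]
    have : chat * (M / 2 ^ k i) = (chat * M) * ((2:ℝ) ^ (k i))⁻¹ := by ring
    rw [this, Real.mul_rpow (by positivity) (by positivity)]
    congr 1
    rw [← Real.rpow_natCast (2:ℝ) (k i), ← Real.rpow_neg (by norm_num),
      ← Real.rpow_natCast ((2:ℝ) ^ (-δ)) (k i), ← Real.rpow_mul (by norm_num),
      ← Real.rpow_mul (by norm_num)]
    ring_nf
  -- bounded partial sums
  apply summable_of_sum_le (c := (K : ℝ) * ∑' k₀, g k₀)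
  · intro i
    exact Real.rpow_nonneg (hR0 i).le δ
  · intro u
    calc ∑ i ∈ u, R i ^ δ
        ≤ ∑ i ∈ u, g (k i) := Finset.sum_le_sum fun i _ => hfg i
      _ = ∑ k₀ ∈ u.image k, ∑ i ∈ u.filter (fun i => k i = k₀), g (k i) :=
          (Finset.sum_fiberwise_of_maps_to (fun i hi => Finset.mem_image_of_mem k hi) _).symm
      _ ≤ ∑ k₀ ∈ u.image k, (K : ℝ) * g k₀ := by
          apply Finset.sum_le_sum
          intro k₀ _
          have heq : ∀ i ∈ u.filter (fun i => k i = k₀), g (k i) = g k₀ := fun i hi => by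
            rw [(Finset.mem_filter.mp hi).2]
          rw [Finset.sum_congr rfl heq, Finset.sum_const, nsmul_eq_mul]
          apply mul_le_mul_of_nonneg_right _ (hg0 k₀)
          exact_mod_cast hcard k₀ _ (fun i hi => (Finset.mem_filter.mp hi).2)
      _ = (K : ℝ) * ∑ k₀ ∈ u.image k, g k₀ := by rw [Finset.mul_sum]
      _ ≤ (K : ℝ) * ∑' k₀, g k₀ := by
          apply mul_le_mul_of_nonneg_left _ (Nat.cast_nonneg K)
          exact hgsum.sum_le_tsum _ (fun k₀ _ => hg0 k₀)
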